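/- Let K be a field, v ≥ 1 and h ≥ 0 integers, and let n₁ > n₂ > … > n_r ≥ 1 be integers with n_a − n_{a+1} ≥ v for all 1 ≤ a < r. Set α_a = max(0, n_a − v·h) for 1 ≤ a ≤ r. Then for all integers i, k, j with 1 ≤ i ≤ k ≤ r and j ≤ n_k, in the polynomial ring K[x,t] one has t^{α_{k−i+1}}·(x − t^v)^h ∈ (x^i, t^j) (the ideal generated by x^i and t^j). If moreover k < r and j ≤ n_{k+1}, then t^{α_{k−i+1}}·(x − t^v)^h ∈ (x^{i+1}, t^j). -/
import Mathlib


open MvPolynomial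
open Finset

lemma core_mem {K : Type*} [CommRing K] (α v h i j : ℕ)
    (hcond : ∀ l, l ≤ h → l < i → j ≤ α + v * (h - l)) :
    (X 1 : MvPolynomial (Fin 2) K) ^ α * (X 0 - X 1 ^ v) ^ h ∈
      Ideal.span {(X 0 : MvPolynomial (Fin 2) K) ^ i, X 1 ^ j} := by
  have hx : (X 0 : MvPolynomial (Fin 2) K) ^ i ∈
      Ideal.span {(X 0 : MvPolynomial (Fin 2) K) ^ i, X 1 ^ j} :=
    Ideal.subset_span (by simp)
  have ht : (X 1 : MvPolynomial (Fin 2) K) ^ j ∈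
      Ideal.span {(X 0 : MvPolynomial (Fin 2) K) ^ i, X 1 ^ j} :=
    Ideal.subset_span (by simp)
  rw [sub_pow, Finset.mul_sum]
  apply Ideal.sum_mem
  intro l hl
  rw [Finset.mem_range, Nat.lt_succ_iff] at hl
  by_cases hli : l < i
  · have hj : j ≤ α + v * (h - l) := hcond l hl hli
    have hpow : (X 1 : MvPolynomial (Fin 2) K) ^ (α + v * (h - l)) =
        X 1 ^ α * (X 1 ^ v) ^ (h - l) := by rw [pow_add, pow_mul]
    have hdvd : (X 1 : MvPolynomial (Fin 2) K) ^ j ∣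
        X 1 ^ α * ((-1) ^ (l + h) * X 0 ^ l * (X 1 ^ v) ^ (h - l) * (h.choose l : MvPolynomial (Fin 2) K)) := by
      refine dvd_trans (pow_dvd_pow _ hj) ?_
      exact ⟨(-1) ^ (l + h) * X 0 ^ l * (h.choose l : MvPolynomial (Fin 2) K), by
        rw [hpow]; ring⟩
    obtain ⟨c, hc⟩ := hdvd
    rw [hc]
    exact Ideal.mul_mem_right c _ ht
  · push_neg at hli
    have hpow : (X 0 : MvPolynomial (Fin 2) K) ^ i * X 0 ^ (l - i) = X 0 ^ l := by
      rw [← pow_add, Nat.add_sub_cancel' hli]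
    have hdvd : (X 0 : MvPolynomial (Fin 2) K) ^ i ∣
        X 1 ^ α * ((-1) ^ (l + h) * X 0 ^ l * (X 1 ^ v) ^ (h - l) * (h.choose l : MvPolynomial (Fin 2) K)) :=
      ⟨X 1 ^ α * ((-1) ^ (l + h) * X 0 ^ (l - i) * (X 1 ^ v) ^ (h - l) * (h.choose l : MvPolynomial (Fin 2) K)), by
        rw [← hpow]; ring⟩
    obtain ⟨c, hc⟩ := hdvd
    rw [hc]
    exact Ideal.mul_mem_right c _ hx

lemma chain' (v r : ℕ) (n : ℕ → ℕ)
    (hdec : ∀ a, 1 ≤ a → a < r → n (a + 1) + v ≤ n a) :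
    ∀ d k, d + 1 ≤ k → k ≤ r → n k + v * d ≤ n (k - d) := by
  intro d
  induction d with
  | zero => intro k _ _; simp
  | succ d ih =>
    intro k hdk hkr
    have h1 := ih k (by omega) hkr
    have h2 := hdec (k - (d + 1)) (by omega) (by omega)
    have heq : k - (d + 1) + 1 = k - d := by omega
    rw [heq] at h2
    have hms : v * (d + 1) = v * d + v := Nat.mul_succ v d
    omega


/-- **One-variable core of the lemma on the `t`-exponents of the generators**
(Evain, "Computing limit linear series with infinitesimal methods").

`K` a field, `v ≥ 1`, `h ≥ 0`, and `n₁ > n₂ > … > n_r ≥ 1` integers with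
`n_a − n_{a+1} ≥ v` for `1 ≤ a < r`.  Set `α_a = max(0, n_a − v·h)` (here
realized by truncated subtraction `n a - v * h`).  In the polynomial ring
`K[x,t]` (with `x = X 0`, `t = X 1`), for `1 ≤ i ≤ k ≤ r` and `j ≤ n_k` one has
`t^{α_{k−i+1}}·(x − t^v)^h ∈ (x^i, t^j)`; and if moreover `k < r` and
`j ≤ n_{k+1}`, then `t^{α_{k−i+1}}·(x − t^v)^h ∈ (x^{i+1}, t^j)`. -/
theorem generator_t_exponents {K : Type*} [Field K] (v h r : ℕ) (hv : 1 ≤ v)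
    (n : ℕ → ℕ) (hnr : 1 ≤ n r)
    (hdec : ∀ a, 1 ≤ a → a < r → n (a + 1) + v ≤ n a)
    (i k j : ℕ) (hi : 1 ≤ i) (hik : i ≤ k) (hkr : k ≤ r) :
    (j ≤ n k →
      (X 1 : MvPolynomial (Fin 2) K) ^ (n (k - i + 1) - v * h) * (X 0 - X 1 ^ v) ^ h ∈
        Ideal.span {(X 0 : MvPolynomial (Fin 2) K) ^ i, X 1 ^ j}) ∧
    (k < r → j ≤ n (k + 1) →
      (X 1 : MvPolynomial (Fin 2) K) ^ (n (k - i + 1) - v * h) * (X 0 - X 1 ^ v) ^ h ∈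
        Ideal.span {(X 0 : MvPolynomial (Fin 2) K) ^ (i + 1), X 1 ^ j}) := by
  constructor
  · intro hj
    apply core_mem
    intro l hl hli
    have hch := chain' v r n hdec (i - 1) k (by omega) hkr
    rw [show k - (i - 1) = k - i + 1 from by omega] at hch
    have hmul : v * l ≤ v * (i - 1) := Nat.mul_le_mul_left v (by omega)
    have hsub : n (k - i + 1) ≤ (n (k - i + 1) - v * h) + v * h := by omega
    have hvl : v * l + v * (h - l) = v * h := by rw [← Nat.mul_add]; congr 1; omega
    omega
  · intro hk hj
    apply core_mem
    intro l hl hli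
    have hch := chain' v r n hdec i (k + 1) (by omega) (by omega)
    rw [show k + 1 - i = k - i + 1 from by omega] at hch
    have hmul : v * l ≤ v * i := Nat.mul_le_mul_left v (by omega)
    have hsub : n (k - i + 1) ≤ (n (k - i + 1) - v * h) + v * h := by omega
    have hvl : v * l + v * (h - l) = v * h := by rw [← Nat.mul_add]; congr 1; omega
    omega
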